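/- Let C(Π) be the proper cycle partition of a finite balanced set Π of Poisson edges, and let S ⊆ C(Π). Then the set Π' := (Π \ ∪S) ∪ (∪_{η ∈ S} η^{-1}) obtained by replacing each cycle in S by its directional inverse is again balanced, and its proper cycle partition is C(Π') = (C(Π) \ S) ∪ {η^{-1} : η ∈ S}. -/

import Mathlib

open scoped Classical

namespace BKT

/-- A Poisson edge: a directed edge of a graph on `V` decorated with a time. -/
abbrev PEdge (V : Type*) := (V × V) × ℝ

variable {V : Type*}

/-- The edges of `Π` going out of `x`. -/
noncomputable def outEdges (Pi : Finset (PEdge V)) (x : V) : Finset (PEdge V) :=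
  Pi.filter (fun e => e.1.1 = x)

/-- The edges of `Π` coming into `x`. -/
noncomputable def inEdges (Pi : Finset (PEdge V)) (x : V) : Finset (PEdge V) :=
  Pi.filter (fun e => e.1.2 = x)

/-- `Π` is balanced: at every vertex the in-degree equals the out-degree. -/
def Balanced (Pi : Finset (PEdge V)) : Prop :=
  ∀ x : V, (outEdges Pi x).card = (inEdges Pi x).card

/-- All times of the Poisson edges of `Π` are distinct. -/
def DistinctTimes (Pi : Finset (PEdge V)) : Prop :=
  ∀ e ∈ Pi, ∀ e' ∈ Pi, e.2 = e'.2 → e = e'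

/-- The edge `e` touches the vertex `x`. -/
def touches (e : PEdge V) (x : V) : Prop := e.1.1 = x ∨ e.1.2 = x

/-- The set of vertices incident to some edge of `η`. -/
noncomputable def verts (η : Finset (PEdge V)) : Finset V :=
  η.image (fun e => e.1.1) ∪ η.image (fun e => e.1.2)

/-- The edge set `η` is connected: no nontrivial split into two parts that do
not share a vertex. -/
def ConnectedEdges (η : Finset (PEdge V)) : Prop :=
  ∀ s ⊆ η, s.Nonempty → s ≠ η →
    ∃ e ∈ s, ∃ e' ∈ η \ s, ∃ x : V, touches e x ∧ touches e' x

/-- `η` is a cycle: a nonempty connected set of Poisson edges in which every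
visited vertex has in-degree and out-degree exactly one. -/
def IsCycle (η : Finset (PEdge V)) : Prop :=
  η.Nonempty ∧ ConnectedEdges η ∧
    ∀ x ∈ verts η, (outEdges η x).card = 1 ∧ (inEdges η x).card = 1

/-- `P` is a partition of `Π` into cycles. -/
def IsCyclePartition (Pi : Finset (PEdge V)) (P : Finset (Finset (PEdge V))) : Prop :=
  (∀ η ∈ P, IsCycle η) ∧ (∀ η ∈ P, η ⊆ Pi) ∧
    (∀ η ∈ P, ∀ η' ∈ P, η ≠ η' → Disjoint η η') ∧
    (∀ e ∈ Pi, ∃ η ∈ P, e ∈ η)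

/-- One step of the activation-time relation: `η` and `η'` share a vertex at
which the activation time of `η` is at most that of `η'`. -/
def stepRel (η η' : Finset (PEdge V)) : Prop :=
  ∃ e ∈ η, ∃ e' ∈ η', e.1.1 = e'.1.1 ∧ e.2 ≤ e'.2

/-- The relation `⪯` on a cycle partition `P`, generated by chains of cycles
in `P` with nondecreasing activation times at shared vertices. -/
def precRel (P : Finset (Finset (PEdge V))) (η η' : Finset (PEdge V)) : Prop :=
  Relation.ReflTransGen (fun a b => a ∈ P ∧ b ∈ P ∧ stepRel a b) η η'

/-- `P` is a proper cycle partition of `Π`: a cycle partition on which `⪯`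
is a partial order (i.e., antisymmetric). -/
def IsProperCyclePartition (Pi : Finset (PEdge V)) (P : Finset (Finset (PEdge V))) : Prop :=
  IsCyclePartition Pi P ∧
    ∀ η ∈ P, ∀ η' ∈ P, precRel P η η' → precRel P η' η → η = η'


/-- The activation time of `η` at `x`: the time of the unique edge of `η`
leaving `x` (expressed as the sum over outgoing edges, which for a cycle has a
single term). -/
noncomputable def actTime (η : Finset (PEdge V)) (x : V) : ℝ :=
  ∑ e ∈ outEdges η x, e.2

/-- The directional inverse of a cycle: every edge `(xy, τ)` is replaced by
`(yx, a_y(η))`. -/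
noncomputable def dirInv (η : Finset (PEdge V)) : Finset (PEdge V) :=
  η.image (fun e => ((e.1.2, e.1.1), actTime η e.1.2))

/-! ### Auxiliary lemmas -/

lemma mem_outEdges {Pi : Finset (PEdge V)} {x : V} {e : PEdge V} :
    e ∈ outEdges Pi x ↔ e ∈ Pi ∧ e.1.1 = x := Finset.mem_filter

lemma mem_inEdges {Pi : Finset (PEdge V)} {x : V} {e : PEdge V} :
    e ∈ inEdges Pi x ↔ e ∈ Pi ∧ e.1.2 = x := Finset.mem_filter

lemma mem_verts_left {η : Finset (PEdge V)} {e : PEdge V} (he : e ∈ η) : e.1.1 ∈ verts η :=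
  Finset.mem_union_left _ (Finset.mem_image_of_mem _ he)

lemma mem_verts_right {η : Finset (PEdge V)} {e : PEdge V} (he : e ∈ η) : e.1.2 ∈ verts η :=
  Finset.mem_union_right _ (Finset.mem_image_of_mem _ he)

lemma outEdges_eq_empty {η : Finset (PEdge V)} {x : V} (hx : x ∉ verts η) :
    outEdges η x = ∅ := by
  rw [Finset.eq_empty_iff_forall_notMem]
  intro e he
  rw [mem_outEdges] at he
  exact hx (he.2 ▸ mem_verts_left he.1)

lemma inEdges_eq_empty {η : Finset (PEdge V)} {x : V} (hx : x ∉ verts η) :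
    inEdges η x = ∅ := by
  rw [Finset.eq_empty_iff_forall_notMem]
  intro e he
  rw [mem_inEdges] at he
  exact hx (he.2 ▸ mem_verts_right he.1)

lemma outEdges_subset {η : Finset (PEdge V)} {x : V} : outEdges η x ⊆ η :=
  Finset.filter_subset _ _

lemma inEdges_subset {η : Finset (PEdge V)} {x : V} : inEdges η x ⊆ η :=
  Finset.filter_subset _ _

lemma outEdges_singleton {η : Finset (PEdge V)} (hη : IsCycle η) {x : V} (hx : x ∈ verts η) :
    ∃ e, outEdges η x = {e} :=
  Finset.card_eq_one.mp (hη.2.2 x hx).1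

lemma inEdges_singleton {η : Finset (PEdge V)} (hη : IsCycle η) {x : V} (hx : x ∈ verts η) :
    ∃ e, inEdges η x = {e} :=
  Finset.card_eq_one.mp (hη.2.2 x hx).2

lemma actTime_eq {η : Finset (PEdge V)} (hη : IsCycle η) {e : PEdge V} (he : e ∈ η) :
    actTime η e.1.1 = e.2 := by
  obtain ⟨e₀, h0⟩ := outEdges_singleton hη (mem_verts_left he)
  have : e ∈ outEdges η e.1.1 := mem_outEdges.mpr ⟨he, rfl⟩
  rw [h0, Finset.mem_singleton] at this
  rw [actTime, h0, Finset.sum_singleton, ← this]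

/-- In a cycle, an edge is determined by its head. -/
lemma cycle_snd_inj {η : Finset (PEdge V)} (hη : IsCycle η) {e e' : PEdge V}
    (he : e ∈ η) (he' : e' ∈ η) (h : e.1.2 = e'.1.2) : e = e' := by
  obtain ⟨e₀, h0⟩ := inEdges_singleton hη (mem_verts_right he)
  have h1 : e ∈ inEdges η e.1.2 := mem_inEdges.mpr ⟨he, rfl⟩
  have h2 : e' ∈ inEdges η e.1.2 := mem_inEdges.mpr ⟨he', h.symm⟩
  rw [h0, Finset.mem_singleton] at h1 h2
  rw [h1, h2]

lemma outEdges_dirInv (η : Finset (PEdge V)) (x : V) :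
    outEdges (dirInv η) x
      = (inEdges η x).image (fun e => ((e.1.2, e.1.1), actTime η e.1.2)) := by
  ext e'
  simp only [mem_outEdges, mem_inEdges, dirInv, Finset.mem_image]
  constructor
  · rintro ⟨⟨e, he, rfl⟩, hx⟩
    exact ⟨e, ⟨he, hx⟩, rfl⟩
  · rintro ⟨e, ⟨he, hx⟩, rfl⟩
    exact ⟨⟨e, he, rfl⟩, hx⟩

lemma inEdges_dirInv (η : Finset (PEdge V)) (x : V) :
    inEdges (dirInv η) x
      = (outEdges η x).image (fun e => ((e.1.2, e.1.1), actTime η e.1.2)) := by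
  ext e'
  simp only [mem_outEdges, mem_inEdges, dirInv, Finset.mem_image]
  constructor
  · rintro ⟨⟨e, he, rfl⟩, hx⟩
    exact ⟨e, ⟨he, hx⟩, rfl⟩
  · rintro ⟨e, ⟨he, hx⟩, rfl⟩
    exact ⟨⟨e, he, rfl⟩, hx⟩

lemma verts_dirInv (η : Finset (PEdge V)) : verts (dirInv η) = verts η := by
  unfold verts dirInv
  rw [Finset.image_image, Finset.image_image, Finset.union_comm]
  rfl

lemma actTime_dirInv {η : Finset (PEdge V)} (hη : IsCycle η) (x : V) :
    actTime (dirInv η) x = actTime η x := by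
  by_cases hx : x ∈ verts η
  · obtain ⟨e, he⟩ := inEdges_singleton hη hx
    have hex : e ∈ inEdges η x := he ▸ Finset.mem_singleton_self e
    rw [mem_inEdges] at hex
    rw [actTime, outEdges_dirInv, he, Finset.image_singleton, Finset.sum_singleton]
    simp [hex.2]
  · rw [actTime, actTime, outEdges_dirInv, inEdges_eq_empty hx, outEdges_eq_empty hx]
    simp

lemma isCycle_dirInv {η : Finset (PEdge V)} (hη : IsCycle η) : IsCycle (dirInv η) := by
  set f : PEdge V → PEdge V := fun e => ((e.1.2, e.1.1), actTime η e.1.2) with hf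
  have hinj : ∀ e ∈ η, ∀ e' ∈ η, f e = f e' → e = e' := by
    intro e he e' he' h
    exact cycle_snd_inj hη he he' (congrArg (fun z => z.1.1) h)
  refine ⟨hη.1.image f, ?_, ?_⟩
  · -- connectedness
    intro s hs hsne hsneq
    set s' : Finset (PEdge V) := η.filter (fun e => f e ∈ s) with hs'
    have hims : s'.image f = s := by
      apply Finset.Subset.antisymm
      · intro e' he'
        obtain ⟨e, he, rfl⟩ := Finset.mem_image.mp he'
        exact (Finset.mem_filter.mp he).2
      · intro e' he'
        obtain ⟨e, he, rfl⟩ := Finset.mem_image.mp (hs he')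
        exact Finset.mem_image_of_mem f (Finset.mem_filter.mpr ⟨he, he'⟩)
    have hs'ne : s'.Nonempty := by
      obtain ⟨e', he'⟩ := hsne
      obtain ⟨e, he, rfl⟩ := Finset.mem_image.mp (hs he')
      exact ⟨e, Finset.mem_filter.mpr ⟨he, he'⟩⟩
    have hs'neq : s' ≠ η := by
      intro h
      exact hsneq (by rw [← hims, h]; rfl)
    obtain ⟨e, hes, e', he', x, hte, hte'⟩ :=
      hη.2.1 s' (Finset.filter_subset _ _) hs'ne hs'neq
    rw [Finset.mem_sdiff] at he'
    refine ⟨f e, (Finset.mem_filter.mp hes).2, f e', ?_, x, Or.symm hte, Or.symm hte'⟩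
    rw [Finset.mem_sdiff]
    refine ⟨Finset.mem_image_of_mem f he'.1, fun hc => he'.2 (Finset.mem_filter.mpr ⟨he'.1, hc⟩)⟩
  · -- degrees
    intro x hx
    rw [verts_dirInv] at hx
    constructor
    · rw [outEdges_dirInv, ← hf]
      rw [Finset.card_image_of_injOn
        (fun e he e' he' h => hinj e (inEdges_subset he) e' (inEdges_subset he') h)]
      exact (hη.2.2 x hx).2
    · rw [inEdges_dirInv, ← hf]
      rw [Finset.card_image_of_injOn
        (fun e he e' he' h => hinj e (outEdges_subset he) e' (outEdges_subset he') h)]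
      exact (hη.2.2 x hx).1

lemma exists_time_dirInv {η : Finset (PEdge V)} (hη : IsCycle η) {e : PEdge V}
    (he : e ∈ dirInv η) : ∃ e₁ ∈ η, e₁.2 = e.2 := by
  obtain ⟨e₀, he₀, rfl⟩ := Finset.mem_image.mp he
  obtain ⟨e₁, h1⟩ := outEdges_singleton hη (mem_verts_right he₀)
  have he₁ : e₁ ∈ outEdges η e₀.1.2 := h1 ▸ Finset.mem_singleton_self e₁
  rw [mem_outEdges] at he₁
  exact ⟨e₁, he₁.1, by simp [actTime, h1]⟩

lemma cycle_balanced {η : Finset (PEdge V)} (hη : IsCycle η) (x : V) :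
    (outEdges η x).card = (inEdges η x).card := by
  by_cases hx : x ∈ verts η
  · rw [(hη.2.2 x hx).1, (hη.2.2 x hx).2]
  · rw [outEdges_eq_empty hx, inEdges_eq_empty hx]

lemma balanced_of_partition {Pi : Finset (PEdge V)} {P : Finset (Finset (PEdge V))}
    (h : IsCyclePartition Pi P) : Balanced Pi := by
  intro x
  have hPi : Pi = P.biUnion id := by
    apply Finset.Subset.antisymm
    · intro e he
      obtain ⟨η, hη, heη⟩ := h.2.2.2 e he
      exact Finset.mem_biUnion.mpr ⟨η, hη, heη⟩
    · intro e he
      obtain ⟨η, hη, heη⟩ := Finset.mem_biUnion.mp he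
      exact h.2.1 η hη heη
  have hout : outEdges Pi x = P.biUnion (fun η => outEdges η x) := by
    ext e
    simp only [mem_outEdges, Finset.mem_biUnion, hPi, id]
    tauto
  have hin : inEdges Pi x = P.biUnion (fun η => inEdges η x) := by
    ext e
    simp only [mem_inEdges, Finset.mem_biUnion, hPi, id]
    tauto
  rw [hout, hin,
    Finset.card_biUnion (fun a ha b hb hab =>
      Finset.disjoint_of_subset_left outEdges_subset
        (Finset.disjoint_of_subset_right outEdges_subset (h.2.2.1 a ha b hb hab))),
    Finset.card_biUnion (fun a ha b hb hab =>
      Finset.disjoint_of_subset_left inEdges_subset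
        (Finset.disjoint_of_subset_right inEdges_subset (h.2.2.1 a ha b hb hab)))]
  exact Finset.sum_congr rfl (fun η hη => cycle_balanced (h.1 η hη) x)

lemma stepRel_iff {a b : Finset (PEdge V)} (ha : IsCycle a) (hb : IsCycle b) :
    stepRel a b ↔ ∃ x, x ∈ verts a ∧ x ∈ verts b ∧ actTime a x ≤ actTime b x := by
  constructor
  · rintro ⟨e, he, e', he', hxx, hle⟩
    refine ⟨e.1.1, mem_verts_left he, hxx ▸ mem_verts_left he', ?_⟩
    rw [actTime_eq ha he]
    rw [show e.1.1 = e'.1.1 from hxx, actTime_eq hb he']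
    exact hle
  · rintro ⟨x, hxa, hxb, hle⟩
    obtain ⟨e, hea⟩ := outEdges_singleton ha hxa
    obtain ⟨e', heb⟩ := outEdges_singleton hb hxb
    have he : e ∈ outEdges a x := hea ▸ Finset.mem_singleton_self e
    have he' : e' ∈ outEdges b x := heb ▸ Finset.mem_singleton_self e'
    rw [mem_outEdges] at he he'
    refine ⟨e, he.1, e', he'.1, he.2.trans he'.2.symm, ?_⟩
    have h1 : actTime a x = e.2 := by rw [← he.2]; exact actTime_eq ha he.1
    have h2 : actTime b x = e'.2 := by rw [← he'.2]; exact actTime_eq hb he'.1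
    rw [← h1, ← h2]; exact hle

/-- Direction inversion commutes with the proper cycle partition: replacing
each cycle of `S ⊆ C(Π)` by its directional inverse yields a balanced set
whose proper cycle partition is `(C(Π) \ S) ∪ {η⁻¹ : η ∈ S}`. -/
theorem dirInv_properCyclePartition
    (Pi : Finset (PEdge V)) (hdist : DistinctTimes Pi) (hbal : Balanced Pi)
    (P : Finset (Finset (PEdge V))) (hP : IsProperCyclePartition Pi P)
    (S : Finset (Finset (PEdge V))) (hS : S ⊆ P) :
    Balanced ((Pi \ S.sup id) ∪ S.sup dirInv) ∧
      IsProperCyclePartition ((Pi \ S.sup id) ∪ S.sup dirInv)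
        ((P \ S) ∪ S.image dirInv) := by
  classical
  set Pi' := (Pi \ S.sup id) ∪ S.sup dirInv with hPi'def
  set P' := (P \ S) ∪ S.image dirInv with hP'def
  have hcyc : ∀ η ∈ P, IsCycle η := hP.1.1
  have hsub : ∀ η ∈ P, η ⊆ Pi := hP.1.2.1
  have hdisj : ∀ η ∈ P, ∀ η' ∈ P, η ≠ η' → Disjoint η η' := hP.1.2.2.1
  have hcov : ∀ e ∈ Pi, ∃ η ∈ P, e ∈ η := hP.1.2.2.2
  have hkey : ∀ a ∈ S, ∀ e ∈ dirInv a, e ∈ Pi → e ∈ a := by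
    intro a ha e he hePi
    obtain ⟨e₁, he₁, ht⟩ := exists_time_dirInv (hcyc a (hS ha)) he
    exact (hdist e₁ (hsub a (hS ha) he₁) e hePi ht) ▸ he₁
  have hdisjInv : ∀ a ∈ S, ∀ b ∈ S, a ≠ b → Disjoint (dirInv a) (dirInv b) := by
    intro a ha b hb hab
    rw [Finset.disjoint_left]
    intro e hea heb
    obtain ⟨e₁, he₁, ht₁⟩ := exists_time_dirInv (hcyc a (hS ha)) hea
    obtain ⟨e₂, he₂, ht₂⟩ := exists_time_dirInv (hcyc b (hS hb)) heb
    have he12 : e₁ = e₂ :=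
      hdist e₁ (hsub a (hS ha) he₁) e₂ (hsub b (hS hb) he₂) (ht₁.trans ht₂.symm)
    exact (Finset.disjoint_left.mp (hdisj a (hS ha) b (hS hb) hab)) he₁ (he12 ▸ he₂)
  have hsubP' : ∀ η ∈ P \ S, η ⊆ Pi \ S.sup id := by
    intro η hη e he
    rw [Finset.mem_sdiff] at hη ⊢
    refine ⟨hsub η hη.1 he, fun hc => ?_⟩
    obtain ⟨b, hb, heb⟩ := Finset.mem_sup.mp hc
    have hne : η ≠ b := fun h => hη.2 (h ▸ hb)
    exact (Finset.disjoint_left.mp (hdisj η hη.1 b (hS hb) hne)) he heb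
  have hdisjMix : ∀ η ∈ P \ S, ∀ b ∈ S, Disjoint η (dirInv b) := by
    intro η hη b hb
    rw [Finset.disjoint_left]
    intro e he heb
    have h1 := hsubP' η hη he
    rw [Finset.mem_sdiff] at h1
    exact h1.2 (Finset.mem_sup.mpr ⟨b, hb, hkey b hb e heb h1.1⟩)
  have hCP : IsCyclePartition Pi' P' := by
    refine ⟨?_, ?_, ?_, ?_⟩
    · intro η hη
      rcases Finset.mem_union.mp hη with h | h
      · exact hcyc η (Finset.mem_sdiff.mp h).1
      · obtain ⟨a, ha, rfl⟩ := Finset.mem_image.mp h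
        exact isCycle_dirInv (hcyc a (hS ha))
    · intro η hη
      rcases Finset.mem_union.mp hη with h | h
      · exact (hsubP' η h).trans Finset.subset_union_left
      · obtain ⟨a, ha, rfl⟩ := Finset.mem_image.mp h
        exact (Finset.le_sup (f := dirInv) ha).trans Finset.subset_union_right
    · intro η hη η' hη' hne
      rcases Finset.mem_union.mp hη with h | h <;> rcases Finset.mem_union.mp hη' with h' | h'
      · exact hdisj η (Finset.mem_sdiff.mp h).1 η' (Finset.mem_sdiff.mp h').1 hne
      · obtain ⟨a, ha, rfl⟩ := Finset.mem_image.mp h'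
        exact hdisjMix η h a ha
      · obtain ⟨a, ha, rfl⟩ := Finset.mem_image.mp h
        exact (hdisjMix η' h' a ha).symm
      · obtain ⟨a, ha, rfl⟩ := Finset.mem_image.mp h
        obtain ⟨b, hb, rfl⟩ := Finset.mem_image.mp h'
        exact hdisjInv a ha b hb (fun hc => hne (hc ▸ rfl))
    · intro e he
      rcases Finset.mem_union.mp he with h | h
      · rw [Finset.mem_sdiff] at h
        obtain ⟨η, hη, heη⟩ := hcov e h.1
        have hηS : η ∉ S := fun hc => h.2 (Finset.mem_sup.mpr ⟨η, hc, heη⟩)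
        exact ⟨η, Finset.mem_union_left _ (Finset.mem_sdiff.mpr ⟨hη, hηS⟩), heη⟩
      · obtain ⟨a, ha, hea⟩ := Finset.mem_sup.mp h
        exact ⟨dirInv a, Finset.mem_union_right _ (Finset.mem_image_of_mem _ ha), hea⟩
  refine ⟨balanced_of_partition hCP, hCP, ?_⟩
  have hcyc' : ∀ η ∈ P', IsCycle η := hCP.1
  have hrep0 : ∀ η : Finset (PEdge V), ∃ a, η ∈ P' →
      a ∈ P ∧ verts a = verts η ∧ (∀ x, actTime a x = actTime η x) ∧
        ((η ∈ P \ S ∧ a = η) ∨ (a ∈ S ∧ dirInv a = η)) := by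
    intro η
    by_cases hη : η ∈ P \ S
    · exact ⟨η, fun _ => ⟨(Finset.mem_sdiff.mp hη).1, rfl, fun _ => rfl, Or.inl ⟨hη, rfl⟩⟩⟩
    · by_cases hη' : η ∈ P'
      · rcases Finset.mem_union.mp hη' with h | h
        · exact absurd h hη
        · obtain ⟨a, ha, rfl⟩ := Finset.mem_image.mp h
          exact ⟨a, fun _ => ⟨hS ha, (verts_dirInv a).symm,
            fun x => (actTime_dirInv (hcyc a (hS ha)) x).symm, Or.inr ⟨ha, rfl⟩⟩⟩
      · exact ⟨∅, fun h => absurd h hη'⟩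
  choose rep hrep using hrep0
  have hstep : ∀ a b : Finset (PEdge V), a ∈ P' → b ∈ P' → stepRel a b →
      stepRel (rep a) (rep b) := by
    intro a b ha hb hs
    obtain ⟨haP, hva, hta, _⟩ := hrep a ha
    obtain ⟨hbP, hvb, htb, _⟩ := hrep b hb
    rw [stepRel_iff (hcyc (rep a) haP) (hcyc (rep b) hbP)]
    obtain ⟨x, hx1, hx2, hle⟩ := (stepRel_iff (hcyc' a ha) (hcyc' b hb)).mp hs
    exact ⟨x, by rw [hva]; exact hx1, by rw [hvb]; exact hx2,
      by rw [hta x, htb x]; exact hle⟩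
  have htrans : ∀ η η', precRel P' η η' → precRel P (rep η) (rep η') := by
    intro η η' h
    induction h with
    | refl => exact Relation.ReflTransGen.refl
    | tail _ hbc ih =>
        exact ih.tail ⟨(hrep _ hbc.1).1, (hrep _ hbc.2.1).1, hstep _ _ hbc.1 hbc.2.1 hbc.2.2⟩
  intro η hη η' hη' h1 h2
  have e1 := htrans η η' h1
  have e2 := htrans η' η h2
  obtain ⟨hP1, -, -, hd1⟩ := hrep η hη
  obtain ⟨hP2, -, -, hd2⟩ := hrep η' hη'
  have heq : rep η = rep η' := hP.2 (rep η) hP1 (rep η') hP2 e1 e2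
  rcases hd1 with ⟨hη1, h1'⟩ | ⟨hη1, h1'⟩ <;> rcases hd2 with ⟨hη2, h2'⟩ | ⟨hη2, h2'⟩
  · rw [← h1', ← h2', heq]
  · exfalso
    have : η ∈ S := by rw [← h1', heq]; exact hη2
    exact (Finset.mem_sdiff.mp hη1).2 this
  · exfalso
    have : η' ∈ S := by rw [← h2', ← heq]; exact hη1
    exact (Finset.mem_sdiff.mp hη2).2 this
  · rw [← h1', ← h2', heq]

end BKT
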